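/- Lemma (Lemma 1). Suppose λ({x ∈ ℝ^d : p_ia·f_a(x)·p_aj > p_ib·f_b(x)·p_bj for all i, j ∈ {a,b}}) > 0, i.e. the set where the four inequalities p_aa f_a(x) p_aa > p_ab f_b(x) p_ba, p_aa f_a(x) p_ab > p_ab f_b(x) p_bb, p_ba f_a(x) p_aa > p_bb f_b(x) p_ba, and p_ba f_a(x) p_ab > p_bb f_b(x) p_bb all hold has positive λ-measure. Then almost surely with respect to the law of (X_i)_{i≥1}, the set {u ≥ 1 : X_u is a strong a-node of (X_1,…,X_u)} is infinite. -/

import Mathlib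

open MeasureTheory

namespace TwoStateHMM

/-- Parameters of a two-state hidden Markov model: strictly positive transition
probabilities `paa, pab, pba, pbb` with row sums one, the (unique) stationary initial
distribution `(pia, pib)`, and emission densities `fa, fb` with respect to a σ-finite
measure `lam` on `ℝ^d`, such that the emission distributions differ. -/
structure HMMParams (d : ℕ) where
  paa : ℝ
  pab : ℝ
  pba : ℝ
  pbb : ℝ
  pia : ℝ
  pib : ℝ
  fa : (Fin d → ℝ) → ℝ
  fb : (Fin d → ℝ) → ℝ
  lam : Measure (Fin d → ℝ)
  paa_pos : 0 < paa
  pab_pos : 0 < pab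
  pba_pos : 0 < pba
  pbb_pos : 0 < pbb
  rowa : paa + pab = 1
  rowb : pba + pbb = 1
  pia_pos : 0 < pia
  pib_pos : 0 < pib
  pi_sum : pia + pib = 1
  pi_stat : pia = pia * paa + pib * pba
  fa_nonneg : ∀ x, 0 ≤ fa x
  fb_nonneg : ∀ x, 0 ≤ fb x
  fa_meas : Measurable fa
  fb_meas : Measurable fb
  lam_sigmaFinite : SigmaFinite lam
  fa_int : ∫ x, fa x ∂lam = 1
  fb_int : ∫ x, fb x ∂lam = 1
  emis_ne : 0 < lam {x | fa x ≠ fb x}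

variable {d : ℕ}

/-- Viterbi scores: `delta P x u = (δ_{u+1}(a), δ_{u+1}(b))` of the sequence
`x_1 = x 0, x_2 = x 1, …` (0-indexed time `u` corresponds to the `(u+1)`-th observation). -/
noncomputable def delta (P : HMMParams d) (x : ℕ → (Fin d → ℝ)) : ℕ → ℝ × ℝ
  | 0 => (P.pia * P.fa (x 0), P.pib * P.fb (x 0))
  | u + 1 =>
      (max ((delta P x u).1 * P.paa) ((delta P x u).2 * P.pba) * P.fa (x (u + 1)),
       max ((delta P x u).1 * P.pab) ((delta P x u).2 * P.pbb) * P.fb (x (u + 1)))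

/-- `x u` (the `(u+1)`-th observation) is a strong `a`-node:
`δ(a)·p_aa > δ(b)·p_ba` and `δ(a)·p_ab > δ(b)·p_bb`. -/
def StrongANode (P : HMMParams d) (x : ℕ → (Fin d → ℝ)) (u : ℕ) : Prop :=
  (delta P x u).2 * P.pba < (delta P x u).1 * P.paa ∧
  (delta P x u).2 * P.pbb < (delta P x u).1 * P.pab

/-- Strong `b`-node. -/
def StrongBNode (P : HMMParams d) (x : ℕ → (Fin d → ℝ)) (u : ℕ) : Prop :=
  (delta P x u).1 * P.paa < (delta P x u).2 * P.pba ∧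
  (delta P x u).1 * P.pab < (delta P x u).2 * P.pbb

/-- Strong node: strong `a`-node or strong `b`-node. -/
def StrongNode (P : HMMParams d) (x : ℕ → (Fin d → ℝ)) (u : ℕ) : Prop :=
  StrongANode P x u ∨ StrongBNode P x u

/-- Weak (not necessarily strong) `a`-node. -/
def WeakANode (P : HMMParams d) (x : ℕ → (Fin d → ℝ)) (u : ℕ) : Prop :=
  (delta P x u).2 * P.pba ≤ (delta P x u).1 * P.paa ∧
  (delta P x u).2 * P.pbb ≤ (delta P x u).1 * P.pab

/-- Weak (not necessarily strong) `b`-node. -/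
def WeakBNode (P : HMMParams d) (x : ℕ → (Fin d → ℝ)) (u : ℕ) : Prop :=
  (delta P x u).1 * P.paa ≤ (delta P x u).2 * P.pba ∧
  (delta P x u).1 * P.pab ≤ (delta P x u).2 * P.pbb

/-- Weak node: weak `a`-node or weak `b`-node. -/
def WeakNode (P : HMMParams d) (x : ℕ → (Fin d → ℝ)) (u : ℕ) : Prop :=
  WeakANode P x u ∨ WeakBNode P x u

/-- The sequence obtained by appending the block `z` after the first `m` elements of `x`. -/
def concatSeq (m : ℕ) (x z : ℕ → (Fin d → ℝ)) : ℕ → (Fin d → ℝ) :=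
  fun i => if i < m then x i else z (i - m)

/-- The block `z 0, …, z (k-1)` is a strong barrier: appended to any prefix, it
contains a strong node. -/
def IsStrongBarrier (P : HMMParams d) (k : ℕ) (z : ℕ → (Fin d → ℝ)) : Prop :=
  ∀ (m : ℕ) (x : ℕ → (Fin d → ℝ)),
    ∃ u, m ≤ u ∧ u < m + k ∧ StrongNode P (concatSeq m x z) u

/-- The block `z 0, …, z (k-1)` is a strong `a`-barrier. -/
def IsStrongABarrier (P : HMMParams d) (k : ℕ) (z : ℕ → (Fin d → ℝ)) : Prop :=
  ∀ (m : ℕ) (x : ℕ → (Fin d → ℝ)),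
    ∃ u, m ≤ u ∧ u < m + k ∧ StrongANode P (concatSeq m x z) u

/-- The block `z 0, …, z (k-1)` is a strong `b`-barrier. -/
def IsStrongBBarrier (P : HMMParams d) (k : ℕ) (z : ℕ → (Fin d → ℝ)) : Prop :=
  ∀ (m : ℕ) (x : ℕ → (Fin d → ℝ)),
    ∃ u, m ≤ u ∧ u < m + k ∧ StrongBNode P (concatSeq m x z) u

/-- Initial probabilities indexed by the hidden state (`true = a`, `false = b`). -/
def HMMParams.initP (P : HMMParams d) : Bool → ℝ := fun s => if s then P.pia else P.pib

/-- Transition probabilities indexed by the hidden states (`true = a`, `false = b`). -/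
def HMMParams.transP (P : HMMParams d) : Bool → Bool → ℝ := fun s t =>
  if s then (if t then P.paa else P.pab) else (if t then P.pba else P.pbb)

/-- Emission densities indexed by the hidden state. -/
def HMMParams.dens (P : HMMParams d) : Bool → (Fin d → ℝ) → ℝ := fun s =>
  if s then P.fa else P.fb

/-- Emission distributions `P_a = f_a·λ`, `P_b = f_b·λ`. -/
noncomputable def HMMParams.emis (P : HMMParams d) : Bool → Measure (Fin d → ℝ) := fun s =>
  P.lam.withDensity fun x => ENNReal.ofReal (P.dens s x)

/-- The likelihood `Λ_π(y_{1:n+1}; x_{1:n+1})` of the hidden path `y` of length `n+1`. -/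
noncomputable def likelihood (P : HMMParams d) (n : ℕ) (y : Fin (n + 1) → Bool)
    (x : ℕ → (Fin d → ℝ)) : ℝ :=
  P.initP (y 0) * (∏ i : Fin n, P.transP (y i.castSucc) (y i.succ)) *
    ∏ i : Fin (n + 1), P.dens (y i) (x i)

/-- `(Y, X)` is (a version of) the two-state HMM with parameters `P` on the probability
space `(Ω, μ)`: the finite-dimensional joint distributions are those of a stationary
Markov chain `Y` with the given transition probabilities, together with observations
`X` that are conditionally independent given `Y`, `X_i` having distribution `P_{Y_i}`. -/
def IsHMM (P : HMMParams d) {Ω : Type} [MeasurableSpace Ω] (μ : Measure Ω)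
    (Y : ℕ → Ω → Bool) (X : ℕ → Ω → (Fin d → ℝ)) : Prop :=
  IsProbabilityMeasure μ ∧ (∀ i, Measurable (Y i)) ∧ (∀ i, Measurable (X i)) ∧
  ∀ (n : ℕ) (y : Fin (n + 1) → Bool) (A : Fin (n + 1) → Set (Fin d → ℝ)),
    (∀ i, MeasurableSet (A i)) →
    μ {ω | ∀ i : Fin (n + 1), Y i ω = y i ∧ X i ω ∈ A i} =
      ENNReal.ofReal (P.initP (y 0) * ∏ i : Fin n, P.transP (y i.castSucc) (y i.succ)) *
        ∏ i : Fin (n + 1), P.emis (y i) (A i)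

section Aux

lemma max_lt_max_aux {α β L1 L2 R1 R2 : ℝ} (hα : 0 ≤ α) (hβ : 0 ≤ β)
    (hpos : 0 < α ∨ 0 < β) (hL1 : 0 ≤ L1) (hL2 : 0 ≤ L2)
    (h1 : L1 < R1) (h2 : L2 < R2) :
    max (α * L1) (β * L2) < max (α * R1) (β * R2) := by
  rcases hpos with hα' | hβ'
  · apply max_lt
    · exact lt_max_iff.2 (Or.inl (by nlinarith))
    · rcases eq_or_lt_of_le hβ with h | h
      · exact lt_max_iff.2 (Or.inl (by nlinarith))
      · exact lt_max_iff.2 (Or.inr (by nlinarith))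
  · apply max_lt
    · rcases eq_or_lt_of_le hα with h | h
      · exact lt_max_iff.2 (Or.inr (by nlinarith))
      · exact lt_max_iff.2 (Or.inl (by nlinarith))
    · exact lt_max_iff.2 (Or.inr (by nlinarith))

lemma delta_pos (P : HMMParams d) (x : ℕ → (Fin d → ℝ))
    (h : ∀ i, 0 < P.fa (x i) ∨ 0 < P.fb (x i)) :
    ∀ u, 0 ≤ (delta P x u).1 ∧ 0 ≤ (delta P x u).2 ∧
      (0 < (delta P x u).1 ∨ 0 < (delta P x u).2) := by
  intro u
  induction u with
  | zero =>
    refine ⟨mul_nonneg P.pia_pos.le (P.fa_nonneg _),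
      mul_nonneg P.pib_pos.le (P.fb_nonneg _), ?_⟩
    rcases h 0 with h0 | h0
    · exact Or.inl (mul_pos P.pia_pos h0)
    · exact Or.inr (mul_pos P.pib_pos h0)
  | succ u ih =>
    obtain ⟨h1, h2, h3⟩ := ih
    have hMa : 0 < max ((delta P x u).1 * P.paa) ((delta P x u).2 * P.pba) := by
      rcases h3 with h3 | h3
      · exact lt_max_iff.2 (Or.inl (mul_pos h3 P.paa_pos))
      · exact lt_max_iff.2 (Or.inr (mul_pos h3 P.pba_pos))
    have hMb : 0 < max ((delta P x u).1 * P.pab) ((delta P x u).2 * P.pbb) := by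
      rcases h3 with h3 | h3
      · exact lt_max_iff.2 (Or.inl (mul_pos h3 P.pab_pos))
      · exact lt_max_iff.2 (Or.inr (mul_pos h3 P.pbb_pos))
    refine ⟨mul_nonneg hMa.le (P.fa_nonneg _), mul_nonneg hMb.le (P.fb_nonneg _), ?_⟩
    rcases h (u + 1) with h0 | h0
    · exact Or.inl (mul_pos hMa h0)
    · exact Or.inr (mul_pos hMb h0)

lemma strongANode_of_mem (P : HMMParams d) (x : ℕ → (Fin d → ℝ))
    (h : ∀ i, 0 < P.fa (x i) ∨ 0 < P.fb (x i)) (v : ℕ)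
    (hC : P.pab * P.fb (x (v+1)) * P.pba < P.paa * P.fa (x (v+1)) * P.paa ∧
      P.pab * P.fb (x (v+1)) * P.pbb < P.paa * P.fa (x (v+1)) * P.pab ∧
      P.pbb * P.fb (x (v+1)) * P.pba < P.pba * P.fa (x (v+1)) * P.paa ∧
      P.pbb * P.fb (x (v+1)) * P.pbb < P.pba * P.fa (x (v+1)) * P.pab) :
    StrongANode P x (v + 1) := by
  obtain ⟨hα, hβ, hpos⟩ := delta_pos P x h v
  obtain ⟨hc1, hc2, hc3, hc4⟩ := hC
  set α := (delta P x v).1 with hαdef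
  set β := (delta P x v).2 with hβdef
  set FA := P.fa (x (v+1)) with hFA
  set FB := P.fb (x (v+1)) with hFB
  have hFA0 : 0 ≤ FA := P.fa_nonneg _
  have hFB0 : 0 ≤ FB := P.fb_nonneg _
  have hd1 : (delta P x (v+1)).1 = max (α * P.paa) (β * P.pba) * FA := rfl
  have hd2 : (delta P x (v+1)).2 = max (α * P.pab) (β * P.pbb) * FB := rfl
  constructor
  · rw [hd1, hd2]
    have e1 : max (α * P.pab) (β * P.pbb) * FB * P.pba
        = max (α * (P.pab * FB * P.pba)) (β * (P.pbb * FB * P.pba)) := by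
      rw [max_mul_of_nonneg _ _ hFB0, max_mul_of_nonneg _ _ P.pba_pos.le]
      ring_nf
    have e2 : max (α * P.paa) (β * P.pba) * FA * P.paa
        = max (α * (P.paa * FA * P.paa)) (β * (P.pba * FA * P.paa)) := by
      rw [max_mul_of_nonneg _ _ hFA0, max_mul_of_nonneg _ _ P.paa_pos.le]
      ring_nf
    rw [e1, e2]
    apply max_lt_max_aux hα hβ hpos
    · exact mul_nonneg (mul_nonneg P.pab_pos.le hFB0) P.pba_pos.le
    · exact mul_nonneg (mul_nonneg P.pbb_pos.le hFB0) P.pba_pos.le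
    · exact hc1
    · exact hc3
  · rw [hd1, hd2]
    have e1 : max (α * P.pab) (β * P.pbb) * FB * P.pbb
        = max (α * (P.pab * FB * P.pbb)) (β * (P.pbb * FB * P.pbb)) := by
      rw [max_mul_of_nonneg _ _ hFB0, max_mul_of_nonneg _ _ P.pbb_pos.le]
      ring_nf
    have e2 : max (α * P.paa) (β * P.pba) * FA * P.pab
        = max (α * (P.paa * FA * P.pab)) (β * (P.pba * FA * P.pab)) := by
      rw [max_mul_of_nonneg _ _ hFA0, max_mul_of_nonneg _ _ P.pab_pos.le]
      ring_nf
    rw [e1, e2]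
    apply max_lt_max_aux hα hβ hpos
    · exact mul_nonneg (mul_nonneg P.pab_pos.le hFB0) P.pbb_pos.le
    · exact mul_nonneg (mul_nonneg P.pbb_pos.le hFB0) P.pbb_pos.le
    · exact hc2
    · exact hc4

lemma initP_nonneg (P : HMMParams d) (s : Bool) : 0 ≤ P.initP s := by
  cases s <;> simp [HMMParams.initP, P.pia_pos.le, P.pib_pos.le]

lemma transP_nonneg (P : HMMParams d) (s t : Bool) : 0 ≤ P.transP s t := by
  cases s <;> cases t <;>
    simp [HMMParams.transP, P.paa_pos.le, P.pab_pos.le, P.pba_pos.le, P.pbb_pos.le]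

lemma dens_nonneg (P : HMMParams d) (s : Bool) (x : Fin d → ℝ) : 0 ≤ P.dens s x := by
  cases s <;> simp [HMMParams.dens, P.fa_nonneg x, P.fb_nonneg x]

lemma dens_meas (P : HMMParams d) (s : Bool) : Measurable (P.dens s) := by
  cases s <;> simp [HMMParams.dens, P.fa_meas, P.fb_meas]

lemma emis_univ (P : HMMParams d) (s : Bool) : P.emis s Set.univ = 1 := by
  have hint : ∫ x, P.dens s x ∂P.lam = 1 := by
    cases s <;> simp [HMMParams.dens, P.fa_int, P.fb_int]
  have hInt : Integrable (P.dens s) P.lam := by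
    by_contra h
    rw [integral_undef h] at hint
    norm_num at hint
  rw [HMMParams.emis, withDensity_apply _ MeasurableSet.univ, Measure.restrict_univ,
    ← ofReal_integral_eq_lintegral_ofReal hInt (Filter.Eventually.of_forall (dens_nonneg P s)),
    hint]
  norm_num

lemma emis_le_one (P : HMMParams d) (s : Bool) (A : Set (Fin d → ℝ)) : P.emis s A ≤ 1 := by
  rw [← emis_univ P s]
  exact measure_mono (Set.subset_univ A)

/-- Marginal law of the observations. -/
lemma marginal (P : HMMParams d) {Ω : Type} [MeasurableSpace Ω] (μ : Measure Ω)
    (Y : ℕ → Ω → Bool) (X : ℕ → Ω → (Fin d → ℝ)) (hHMM : IsHMM P μ Y X)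
    (n : ℕ) (A : ℕ → Set (Fin d → ℝ)) (hA : ∀ i, MeasurableSet (A i)) :
    μ {ω | ∀ i : Fin (n + 1), X i ω ∈ A i} =
      ∑ y : Fin (n + 1) → Bool,
        ENNReal.ofReal (P.initP (y 0) * ∏ i : Fin n, P.transP (y i.castSucc) (y i.succ)) *
          ∏ i : Fin (n + 1), P.emis (y i) (A i) := by
  obtain ⟨hp, hY, hX, hj⟩ := hHMM
  have hset : {ω | ∀ i : Fin (n + 1), X i ω ∈ A i}
      = ⋃ y : Fin (n + 1) → Bool, {ω | ∀ i : Fin (n + 1), Y i ω = y i ∧ X i ω ∈ A i} := by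
    ext ω
    simp only [Set.mem_setOf_eq, Set.mem_iUnion]
    constructor
    · intro h; exact ⟨fun i => Y i ω, fun i => ⟨rfl, h i⟩⟩
    · rintro ⟨y, h⟩ i; exact (h i).2
  have hdisj : Pairwise (Function.onFun Disjoint
      fun y : Fin (n + 1) → Bool => {ω | ∀ i : Fin (n + 1), Y i ω = y i ∧ X i ω ∈ A i}) := by
    intro y y' hne
    rw [Function.onFun, Set.disjoint_left]
    intro ω h1 h2
    exact hne (funext fun i => ((h1 i).1.symm.trans ((h2 i).1)))
  have hmeas : ∀ y : Fin (n + 1) → Bool,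
      MeasurableSet {ω | ∀ i : Fin (n + 1), Y i ω = y i ∧ X i ω ∈ A i} := by
    intro y
    have : {ω | ∀ i : Fin (n + 1), Y i ω = y i ∧ X i ω ∈ A i}
        = ⋂ i : Fin (n + 1), ((Y i ⁻¹' {y i}) ∩ (X i ⁻¹' A (i : ℕ))) := by
      ext ω; simp [Set.mem_iInter, Set.mem_preimage]
    rw [this]
    exact MeasurableSet.iInter fun i =>
      ((hY i (measurableSet_singleton _)).inter (hX i (hA i)))
  rw [hset, measure_iUnion hdisj hmeas, tsum_fintype]
  exact Finset.sum_congr rfl fun y _ => hj n y (fun i => A i) (fun i => hA i)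

/-- One-step bound for the path sum. -/
lemma sum_step (P : HMMParams d) (A : ℕ → Set (Fin d → ℝ)) (n : ℕ) (c : ENNReal)
    (hc : ∀ s : Bool,
      ENNReal.ofReal (P.transP s true) * P.emis true (A (n + 1)) +
        ENNReal.ofReal (P.transP s false) * P.emis false (A (n + 1)) ≤ c) :
    (∑ y : Fin (n + 2) → Bool,
        ENNReal.ofReal (P.initP (y 0) * ∏ i : Fin (n + 1), P.transP (y i.castSucc) (y i.succ)) *
          ∏ i : Fin (n + 2), P.emis (y i) (A i))
      ≤ c * ∑ y : Fin (n + 1) → Bool,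
        ENNReal.ofReal (P.initP (y 0) * ∏ i : Fin n, P.transP (y i.castSucc) (y i.succ)) *
          ∏ i : Fin (n + 1), P.emis (y i) (A i) := by
  classical
  set F : (Fin (n + 2) → Bool) → ENNReal := fun y =>
    ENNReal.ofReal (P.initP (y 0) * ∏ i : Fin (n + 1), P.transP (y i.castSucc) (y i.succ)) *
      ∏ i : Fin (n + 2), P.emis (y i) (A i) with hF
  set W : (Fin (n + 1) → Bool) → ENNReal := fun z =>
    ENNReal.ofReal (P.initP (z 0) * ∏ i : Fin n, P.transP (z i.castSucc) (z i.succ)) *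
      ∏ i : Fin (n + 1), P.emis (z i) (A i) with hW
  have hbij : Function.Bijective
      (fun p : (Fin (n + 1) → Bool) × Bool => (Fin.snoc p.1 p.2 : Fin (n + 2) → Bool)) := by
    constructor
    · rintro ⟨z, t⟩ ⟨z', t'⟩ h
      simp only [Prod.mk.injEq]
      constructor
      · funext i
        have := congrFun h i.castSucc
        simpa [Fin.snoc_castSucc] using this
      · have := congrFun h (Fin.last (n + 1))
        simpa [Fin.snoc_last] using this
    · intro y
      exact ⟨(Fin.init y, y (Fin.last (n + 1))), Fin.snoc_init_self y⟩
  have key : ∀ (z : Fin (n + 1) → Bool) (t : Bool),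
      F (Fin.snoc z t) = W z * (ENNReal.ofReal (P.transP (z (Fin.last n)) t) *
        P.emis t (A (n + 1))) := by
    intro z t
    have h0 : (Fin.snoc z t : Fin (n + 2) → Bool) 0 = z 0 := by
      rw [← Fin.castSucc_zero, Fin.snoc_castSucc]
    have hprod1 : ∏ i : Fin (n + 1),
        P.transP ((Fin.snoc z t : Fin (n + 2) → Bool) i.castSucc)
          ((Fin.snoc z t : Fin (n + 2) → Bool) i.succ)
        = (∏ i : Fin n, P.transP (z i.castSucc) (z i.succ)) * P.transP (z (Fin.last n)) t := by
      rw [Fin.prod_univ_castSucc]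
      congr 1
      · refine Finset.prod_congr rfl fun i _ => ?_
        rw [Fin.snoc_castSucc, Fin.succ_castSucc, Fin.snoc_castSucc]
      · rw [Fin.snoc_castSucc, Fin.succ_last, Fin.snoc_last]
    have hprod2 : ∏ i : Fin (n + 2), P.emis ((Fin.snoc z t : Fin (n + 2) → Bool) i) (A i)
        = (∏ i : Fin (n + 1), P.emis (z i) (A i)) * P.emis t (A (n + 1)) := by
      rw [Fin.prod_univ_castSucc]
      congr 1
      · refine Finset.prod_congr rfl fun i _ => ?_
        rw [Fin.snoc_castSucc, Fin.coe_castSucc]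
      · rw [Fin.snoc_last, Fin.val_last]
    simp only [hF, hW, h0, hprod1, hprod2]
    have hnn : 0 ≤ P.initP (z 0) * ∏ i : Fin n, P.transP (z i.castSucc) (z i.succ) :=
      mul_nonneg (initP_nonneg P _) (Finset.prod_nonneg fun i _ => transP_nonneg P _ _)
    rw [← mul_assoc (P.initP (z 0)), ENNReal.ofReal_mul hnn]
    ring
  calc (∑ y : Fin (n + 2) → Bool, F y)
      = ∑ p : (Fin (n + 1) → Bool) × Bool, F (Fin.snoc p.1 p.2) :=
        (Fintype.sum_bijective _ hbij _ F fun p => rfl).symm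
    _ = ∑ z : Fin (n + 1) → Bool, ∑ t : Bool, F (Fin.snoc z t) :=
        Fintype.sum_prod_type _
    _ = ∑ z : Fin (n + 1) → Bool, W z *
          (ENNReal.ofReal (P.transP (z (Fin.last n)) true) * P.emis true (A (n + 1)) +
           ENNReal.ofReal (P.transP (z (Fin.last n)) false) * P.emis false (A (n + 1))) := by
        refine Finset.sum_congr rfl fun z _ => ?_
        rw [Fintype.sum_bool, key, key, mul_add]
    _ ≤ ∑ z : Fin (n + 1) → Bool, W z * c :=
        Finset.sum_le_sum fun z _ => mul_le_mul_right (hc _) _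
    _ = c * ∑ z : Fin (n + 1) → Bool, W z := by
        rw [← Finset.sum_mul, mul_comm]

lemma emis_nullset (P : HMMParams d) (s : Bool) :
    P.emis s {x | P.fa x = 0 ∧ P.fb x = 0} = 0 := by
  have hN : MeasurableSet {x | P.fa x = 0 ∧ P.fb x = 0} := by
    have h1 : MeasurableSet {x | P.fa x = 0} := P.fa_meas (measurableSet_singleton 0)
    have h2 : MeasurableSet {x | P.fb x = 0} := P.fb_meas (measurableSet_singleton 0)
    exact h1.inter h2
  rw [HMMParams.emis, withDensity_apply _ hN]
  have hz : ∀ᵐ x ∂P.lam, x ∈ {x | P.fa x = 0 ∧ P.fb x = 0} →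
      ENNReal.ofReal (P.dens s x) = (0 : ENNReal) := by
    refine Filter.Eventually.of_forall fun x hx => ?_
    cases s <;> simp [HMMParams.dens, hx.1, hx.2]
  rw [setLIntegral_congr_fun_ae hN hz]
  simp


end Aux

/-- **Lemma 1.** If the set of `x` satisfying the four inequalities
`p_ia·f_a(x)·p_aj > p_ib·f_b(x)·p_bj` (for all `i, j ∈ {a,b}`) has positive `λ`-measure,
then almost every realization has infinitely many strong `a`-nodes. -/
theorem lemma1_strong_a_nodes {d : ℕ} (P : HMMParams d) {Ω : Type} [MeasurableSpace Ω]
    (μ : Measure Ω) (Y : ℕ → Ω → Bool) (X : ℕ → Ω → (Fin d → ℝ))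
    (hHMM : IsHMM P μ Y X)
    (hset : 0 < P.lam {x |
      P.pab * P.fb x * P.pba < P.paa * P.fa x * P.paa ∧
      P.pab * P.fb x * P.pbb < P.paa * P.fa x * P.pab ∧
      P.pbb * P.fb x * P.pba < P.pba * P.fa x * P.paa ∧
      P.pbb * P.fb x * P.pbb < P.pba * P.fa x * P.pab}) :
    ∀ᵐ ω ∂μ, {u : ℕ | StrongANode P (fun i => X i ω) u}.Infinite := by
  classical
  obtain ⟨hprob, hY, hX, hj⟩ := hHMM
  haveI := hprob
  set C : Set (Fin d → ℝ) := {x |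
      P.pab * P.fb x * P.pba < P.paa * P.fa x * P.paa ∧
      P.pab * P.fb x * P.pbb < P.paa * P.fa x * P.pab ∧
      P.pbb * P.fb x * P.pba < P.pba * P.fa x * P.paa ∧
      P.pbb * P.fb x * P.pbb < P.pba * P.fa x * P.pab} with hCdef
  have hCmeas : MeasurableSet C := by
    have m1 : Measurable fun x => P.pab * P.fb x * P.pba :=
      (measurable_const.mul P.fb_meas).mul measurable_const
    have m2 : Measurable fun x => P.paa * P.fa x * P.paa :=
      (measurable_const.mul P.fa_meas).mul measurable_const
    have m3 : Measurable fun x => P.pab * P.fb x * P.pbb :=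
      (measurable_const.mul P.fb_meas).mul measurable_const
    have m4 : Measurable fun x => P.paa * P.fa x * P.pab :=
      (measurable_const.mul P.fa_meas).mul measurable_const
    have m5 : Measurable fun x => P.pbb * P.fb x * P.pba :=
      (measurable_const.mul P.fb_meas).mul measurable_const
    have m6 : Measurable fun x => P.pba * P.fa x * P.paa :=
      (measurable_const.mul P.fa_meas).mul measurable_const
    have m7 : Measurable fun x => P.pbb * P.fb x * P.pbb :=
      (measurable_const.mul P.fb_meas).mul measurable_const
    have m8 : Measurable fun x => P.pba * P.fa x * P.pab :=
      (measurable_const.mul P.fa_meas).mul measurable_const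
    rw [hCdef]
    simp only [Set.setOf_and]
    exact ((measurableSet_lt m1 m2).inter ((measurableSet_lt m3 m4).inter
      ((measurableSet_lt m5 m6).inter (measurableSet_lt m7 m8))))
  -- f_a is positive on C
  have hfaC : ∀ x ∈ C, 0 < P.fa x := by
    intro x hx
    by_contra h
    push_neg at h
    have hfa0 : P.fa x = 0 := le_antisymm h (P.fa_nonneg x)
    have h1 := hx.1
    rw [hfa0] at h1
    nlinarith [mul_nonneg (mul_nonneg P.pab_pos.le (P.fb_nonneg x)) P.pba_pos.le]
  -- emission measure of C under state a is positive
  have hεpos : 0 < P.emis true C := by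
    rw [pos_iff_ne_zero]
    intro h0
    rw [HMMParams.emis, withDensity_apply _ hCmeas,
      setLIntegral_eq_zero_iff hCmeas (Measurable.ennreal_ofReal (dens_meas P true))] at h0
    have hsub : C ⊆ {x | ¬ (x ∈ C → ENNReal.ofReal (P.dens true x) = 0)} := by
      intro x hx h
      have hpos : 0 < P.dens true x := by simpa [HMMParams.dens] using hfaC x hx
      exact (ne_of_gt (ENNReal.ofReal_pos.2 hpos)) (h hx)
    exact (ne_of_gt hset) (measure_mono_null hsub (ae_iff.mp h0))
  set ε : ENNReal := P.emis true C with hεdef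
  have hεle : ε ≤ 1 := emis_le_one P true C
  have hεtop : ε ≠ ⊤ := ne_top_of_le_ne_top ENNReal.one_ne_top hεle
  set r : ℝ := min P.paa P.pba with hrdef
  have hrpos : 0 < r := lt_min P.paa_pos P.pba_pos
  set q : ENNReal := 1 - ENNReal.ofReal r * ε with hqdef
  have hqlt : q < 1 := ENNReal.sub_lt_self ENNReal.one_ne_top one_ne_zero
    (mul_ne_zero (ENNReal.ofReal_pos.2 hrpos).ne' hεpos.ne')
  have hstep : ∀ s : Bool,
      ENNReal.ofReal (P.transP s true) * P.emis true Cᶜ +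
        ENNReal.ofReal (P.transP s false) * P.emis false Cᶜ ≤ q := by
    intro s
    have hcε : ENNReal.ofReal r * ε ≠ ⊤ := ENNReal.mul_ne_top ENNReal.ofReal_ne_top hεtop
    apply ENNReal.le_sub_of_add_le_right hcε
    have hCc : P.emis true Cᶜ = 1 - ε := by
      rw [measure_compl hCmeas (ne_top_of_le_ne_top ENNReal.one_ne_top (emis_le_one P true C)),
        emis_univ]
    have hsum : P.transP s true + P.transP s false = 1 := by
      cases s <;> simp [HMMParams.transP, P.rowa, P.rowb]
    have hrle : r ≤ P.transP s true := by
      rw [hrdef]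
      cases s
      · simp [HMMParams.transP]
      · simp [HMMParams.transP]
    rw [hCc]
    calc ENNReal.ofReal (P.transP s true) * (1 - ε) +
          ENNReal.ofReal (P.transP s false) * P.emis false Cᶜ + ENNReal.ofReal r * ε
        ≤ ENNReal.ofReal (P.transP s true) * (1 - ε) +
          ENNReal.ofReal (P.transP s false) * 1 +
          ENNReal.ofReal (P.transP s true) * ε := by
          refine add_le_add (add_le_add le_rfl ?_) ?_
          · exact mul_le_mul_right (emis_le_one P false Cᶜ) _
          · exact mul_le_mul_left (ENNReal.ofReal_le_ofReal hrle) ε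
      _ = ENNReal.ofReal (P.transP s true) * ((1 - ε) + ε) +
          ENNReal.ofReal (P.transP s false) := by ring
      _ = ENNReal.ofReal (P.transP s true) + ENNReal.ofReal (P.transP s false) := by
          rw [tsub_add_cancel_of_le hεle, mul_one]
      _ = 1 := by
          rw [← ENNReal.ofReal_add (transP_nonneg P s true) (transP_nonneg P s false), hsum,
            ENNReal.ofReal_one]
  -- the bad events have measure zero
  have hBad : ∀ m : ℕ, μ {ω | ∀ u, m ≤ u → X u ω ∉ C} = 0 := by
    intro m
    set A : ℕ → Set (Fin d → ℝ) := fun i => if i < m then Set.univ else Cᶜ with hAdef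
    have hAmeas : ∀ i, MeasurableSet (A i) := by
      intro i
      by_cases h : i < m <;> simp [hAdef, h, hCmeas.compl]
    set T : ℕ → ENNReal := fun n =>
      ∑ y : Fin (n + 1) → Bool,
        ENNReal.ofReal (P.initP (y 0) * ∏ i : Fin n, P.transP (y i.castSucc) (y i.succ)) *
          ∏ i : Fin (n + 1), P.emis (y i) (A i) with hTdef
    have hTμ : ∀ n, T n = μ {ω | ∀ i : Fin (n + 1), X i ω ∈ A i} := fun n =>
      (marginal P μ Y X ⟨hprob, hY, hX, hj⟩ n A hAmeas).symm
    have hT1 : ∀ n, T n ≤ 1 := fun n => by rw [hTμ]; exact prob_le_one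
    have hTs : ∀ n, m ≤ n → T (n + 1) ≤ q * T n := by
      intro n hn
      apply sum_step P A n q
      intro s
      have hA1 : A (n + 1) = Cᶜ := by
        rw [hAdef]
        simp only [if_neg (by omega : ¬ (n + 1 < m))]
      rw [hA1]
      exact hstep s
    have hTq : ∀ n, T (m + n) ≤ q ^ n := by
      intro n
      induction n with
      | zero => simpa using hT1 m
      | succ k ih =>
        calc T (m + (k + 1)) = T ((m + k) + 1) := rfl
          _ ≤ q * T (m + k) := hTs _ (Nat.le_add_right m k)
          _ ≤ q * q ^ k := mul_le_mul_right ih q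
          _ = q ^ (k + 1) := by rw [pow_succ, mul_comm]
    have hsub : ∀ n, {ω | ∀ u, m ≤ u → X u ω ∉ C} ⊆
        {ω | ∀ i : Fin (m + n + 1), X i ω ∈ A i} := by
      intro n ω hω i
      by_cases h : (i : ℕ) < m
      · simp [hAdef, h]
      · simp only [hAdef, if_neg h, Set.mem_compl_iff]
        exact hω i (not_lt.1 h)
    have hle : ∀ n, μ {ω | ∀ u, m ≤ u → X u ω ∉ C} ≤ q ^ n := fun n =>
      le_trans (measure_mono (hsub n)) (by rw [← hTμ]; exact hTq n)
    exact le_antisymm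
      (ge_of_tendsto' (ENNReal.tendsto_pow_atTop_nhds_zero_of_lt_one hqlt) hle)
      (zero_le)
  -- for each i, almost surely not both densities vanish at X i
  have hNull : ∀ i : ℕ, μ {ω | P.fa (X i ω) = 0 ∧ P.fb (X i ω) = 0} = 0 := by
    intro i
    have hNmeas : MeasurableSet {x : Fin d → ℝ | P.fa x = 0 ∧ P.fb x = 0} :=
      (P.fa_meas (measurableSet_singleton 0)).inter (P.fb_meas (measurableSet_singleton 0))
    set A : ℕ → Set (Fin d → ℝ) :=
      fun j => if j = i then {x | P.fa x = 0 ∧ P.fb x = 0} else Set.univ with hAdef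
    have hAmeas : ∀ j, MeasurableSet (A j) := by
      intro j
      by_cases h : j = i <;> simp [hAdef, h, hNmeas]
    have hsets : {ω | P.fa (X i ω) = 0 ∧ P.fb (X i ω) = 0}
        = {ω | ∀ j : Fin (i + 1), X j ω ∈ A j} := by
      ext ω
      simp only [Set.mem_setOf_eq]
      constructor
      · intro h j
        by_cases hj : (j : ℕ) = i
        · rw [hAdef]
          simp only [if_pos hj, Set.mem_setOf_eq, hj]
          exact h
        · simp [hAdef, hj]
      · intro h
        have := h ⟨i, Nat.lt_succ_self i⟩
        simpa [hAdef] using this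
    rw [hsets, marginal P μ Y X ⟨hprob, hY, hX, hj⟩ i A hAmeas]
    refine Finset.sum_eq_zero fun y _ => ?_
    have hz : ∏ j : Fin (i + 1), P.emis (y j) (A j) = 0 := by
      refine Finset.prod_eq_zero (Finset.mem_univ (⟨i, Nat.lt_succ_self i⟩ : Fin (i + 1))) ?_
      have : A ((⟨i, Nat.lt_succ_self i⟩ : Fin (i + 1)) : ℕ)
          = {x | P.fa x = 0 ∧ P.fb x = 0} := by simp [hAdef]
      rw [this]
      exact emis_nullset P _
    rw [hz, mul_zero]
  -- assemble the almost sure event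
  have hA1 : ∀ᵐ ω ∂μ, ∀ i : ℕ, ¬ (P.fa (X i ω) = 0 ∧ P.fb (X i ω) = 0) := by
    rw [ae_all_iff]
    intro i
    rw [ae_iff]
    simpa [not_not] using hNull i
  have hA2 : ∀ᵐ ω ∂μ, ∀ m : ℕ, ∃ u, m ≤ u ∧ X u ω ∈ C := by
    rw [ae_all_iff]
    intro m
    rw [ae_iff]
    have hss : {ω | ¬ ∃ u, m ≤ u ∧ X u ω ∈ C} = {ω | ∀ u, m ≤ u → X u ω ∉ C} := by
      ext ω
      simp [not_exists, not_and]
    rw [hss]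
    exact hBad m
  filter_upwards [hA1, hA2] with ω h1 h2
  have hdens : ∀ i, 0 < P.fa (X i ω) ∨ 0 < P.fb (X i ω) := by
    intro i
    rcases (P.fa_nonneg (X i ω)).lt_or_eq with h | h
    · exact Or.inl h
    · rcases (P.fb_nonneg (X i ω)).lt_or_eq with h' | h'
      · exact Or.inr h'
      · exact absurd ⟨h.symm, h'.symm⟩ (h1 i)
  apply Set.infinite_of_forall_exists_gt
  intro a
  obtain ⟨u, hu, huC⟩ := h2 (a + 1)
  obtain ⟨v, rfl⟩ : ∃ v, u = v + 1 := ⟨u - 1, by omega⟩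
  rw [hCdef] at huC
  exact ⟨v + 1, strongANode_of_mem P (fun i => X i ω) hdens v huC, by omega⟩
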